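/- Let α: ℝ⁶ → M₄(ℝ) be given by α(x₁,…,x₆) = the strictly lower triangular matrix with rows (0,0,0,0), (x₃,0,0,0), (x₁,x₄,0,0), (x₂,x₅,x₆,0), and let κ(x,y) = −(x₁y₄−x₄y₁)E₄₃. Define S⁰ = {v ∈ ℝ⁴ : κ(x,y)v = 0 for all x,y} and inductively Sᵏ = {v ∈ Sᵏ⁻¹ : α(x)v ∈ Sᵏ⁻¹ for all x}. Then S⁰ = {(v₁,v₂,0,v₄)}, S¹ = {(0,0,0,v₄) : v₄ ∈ ℝ}, and Sᵏ = S¹ for all k ≥ 1; in particular the stable solution set S^∞ is the one-dimensional subspace spanned by (0,0,0,1). -/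

import Mathlib

open Matrix

noncomputable section

/-- The extension α of the homogeneous path geometry. -/
def α6 (x : Fin 6 → ℝ) : Matrix (Fin 4) (Fin 4) ℝ :=
  !![0, 0, 0, 0;
     x 2, 0, 0, 0;
     x 0, x 3, 0, 0;
     x 1, x 4, x 5, 0]

/-- Its curvature κ(x,y) = −(x₁y₄ − x₄y₁)E₄₃. -/
def κ6 (x y : Fin 6 → ℝ) : Matrix (Fin 4) (Fin 4) ℝ :=
  (-(x 0 * y 3 - x 3 * y 0)) • Matrix.single (3 : Fin 4) (2 : Fin 4) (1 : ℝ)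

/-- The sets S⁰ ⊇ S¹ ⊇ S² ⊇ ⋯ computing the solution space. -/
def S13 : ℕ → Set (Fin 4 → ℝ)
  | 0 => {v | ∀ x y : Fin 6 → ℝ, (κ6 x y).mulVec v = 0}
  | (k + 1) => {v | v ∈ S13 k ∧ ∀ x : Fin 6 → ℝ, (α6 x).mulVec v ∈ S13 k}

lemma mem_succ (k : ℕ) (v : Fin 4 → ℝ) :
    v ∈ S13 (k + 1) ↔ v ∈ S13 k ∧ ∀ x : Fin 6 → ℝ, (α6 x).mulVec v ∈ S13 k :=
  Iff.rfl

lemma kmul (x y : Fin 6 → ℝ) (v : Fin 4 → ℝ) (i : Fin 4) :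
    (κ6 x y).mulVec v i = (-(x 0 * y 3 - x 3 * y 0)) * (if i = 3 then v 2 else 0) := by
  simp [κ6, Matrix.mulVec, dotProduct, Matrix.single, Fin.sum_univ_four]
  fin_cases i <;> simp

lemma amul (x : Fin 6 → ℝ) (v : Fin 4 → ℝ) :
    (α6 x).mulVec v = ![0, x 2 * v 0, x 0 * v 0 + x 3 * v 1,
      x 1 * v 0 + x 4 * v 1 + x 5 * v 2] := by
  funext i
  fin_cases i <;> simp [α6, Matrix.mulVec, dotProduct, Fin.sum_univ_four]

lemma hS0 : S13 0 = {v | v 2 = 0} := by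
  ext v
  constructor
  · intro h
    have := congrFun (h ![1,0,0,0,0,0] ![0,0,0,1,0,0]) 3
    rw [kmul] at this
    simpa using this
  · intro h x y
    funext i
    rw [kmul]
    simp [Set.mem_setOf_eq.mp h]

lemma hS1 : S13 1 = {v | v 0 = 0 ∧ v 1 = 0 ∧ v 2 = 0} := by
  ext v
  rw [mem_succ]
  simp only [hS0, Set.mem_setOf_eq]
  constructor
  · rintro ⟨h2, h⟩
    have h0 := h ![1,0,0,0,0,0]
    have h1 := h ![0,0,0,1,0,0]
    rw [amul] at h0 h1
    simp at h0 h1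
    exact ⟨by linarith, by linarith, h2⟩
  · rintro ⟨h0, h1, h2⟩
    refine ⟨h2, fun x => ?_⟩
    rw [amul]
    simp [h0, h1, h2]

lemma zero_mem (k : ℕ) : (0 : Fin 4 → ℝ) ∈ S13 k := by
  induction k with
  | zero => intro x y; simp [Matrix.mulVec_zero]
  | succ n ih => exact ⟨ih, fun x => by simpa [Matrix.mulVec_zero] using ih⟩

lemma succ_subset (k : ℕ) : S13 (k + 1) ⊆ S13 k := fun v hv => hv.1

lemma mem_one_of (k : ℕ) (v : Fin 4 → ℝ) (hv : v ∈ S13 (k + 1)) : v ∈ S13 1 := by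
  induction k with
  | zero => exact hv
  | succ n ih => exact ih hv.1

lemma hstep (k : ℕ) (hk : 1 ≤ k) : S13 (k + 1) = S13 k := by
  obtain ⟨n, rfl⟩ := Nat.exists_eq_add_of_le hk
  ext v
  constructor
  · exact fun hv => hv.1
  · intro hv
    refine ⟨hv, fun x => ?_⟩
    obtain ⟨h0, h1, h2⟩ := hS1 ▸ mem_one_of n v (by rwa [Nat.add_comm] at hv)
    have : (α6 x).mulVec v = 0 := by
      rw [amul]; funext i; fin_cases i <;> simp [h0, h1, h2]
    rw [this]
    exact zero_mem _

theorem stmt13 :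
    S13 0 = {v | v 2 = 0} ∧
    S13 1 = {v | v 0 = 0 ∧ v 1 = 0 ∧ v 2 = 0} ∧
    (∀ k : ℕ, 1 ≤ k → S13 k = S13 1) := by
  refine ⟨hS0, hS1, fun k hk => ?_⟩
  induction k with
  | zero => omega
  | succ n ih =>
    rcases Nat.lt_or_ge n 1 with h | h
    · interval_cases n
      rfl
    · rw [hstep n h, ih h]
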